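/- Let k be a field of characteristic zero, (A, ϑ) a Zinbiel coalgebra and (B, ν) a perm coalgebra over k. Define Δ : A ⊗ B → (A ⊗ B) ⊗ (A ⊗ B) by Δ(a ⊗ b) = (id ⊗ id + τ)(ϑ(a) • ν(b)). Then (A ⊗ B, Δ) is a cocommutative coassociative coalgebra, i.e. τΔ = Δ and (Δ ⊗ id)Δ = (id ⊗ Δ)Δ. -/
import Mathlib


open TensorProduct

noncomputable section

def IsZinbiel {k A : Type} [Field k] [AddCommGroup A] [Module k A]
    (ast : A →ₗ[k] A →ₗ[k] A) : Prop :=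
  ∀ a₁ a₂ a₃ : A, ast a₁ (ast a₂ a₃) = ast (ast a₁ a₂) a₃ + ast (ast a₂ a₁) a₃

def IsPreLie {k A : Type} [Field k] [AddCommGroup A] [Module k A]
    (circ : A →ₗ[k] A →ₗ[k] A) : Prop :=
  ∀ a₁ a₂ a₃ : A,
    circ (circ a₁ a₂) a₃ - circ a₁ (circ a₂ a₃)
      = circ (circ a₂ a₁) a₃ - circ a₂ (circ a₁ a₃)

def IsPerm {k B : Type} [Field k] [AddCommGroup B] [Module k B]
    (dia : B →ₗ[k] B →ₗ[k] B) : Prop :=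
  ∀ b₁ b₂ b₃ : B,
    dia b₁ (dia b₂ b₃) = dia (dia b₁ b₂) b₃ ∧
    dia (dia b₁ b₂) b₃ = dia (dia b₂ b₁) b₃

def IsPrePoisson {k A : Type} [Field k] [AddCommGroup A] [Module k A]
    (ast circ : A →ₗ[k] A →ₗ[k] A) : Prop :=
  IsZinbiel ast ∧ IsPreLie circ ∧
  (∀ a₁ a₂ a₃ : A,
    ast (circ a₁ a₂ - circ a₂ a₁) a₃ = circ a₁ (ast a₂ a₃) - ast a₂ (circ a₁ a₃)) ∧
  (∀ a₁ a₂ a₃ : A,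
    circ (ast a₁ a₂ + ast a₂ a₁) a₃ = ast a₁ (circ a₂ a₃) + ast a₂ (circ a₁ a₃))

def IsPoisson {k P : Type} [Field k] [AddCommGroup P] [Module k P]
    (mul br : P →ₗ[k] P →ₗ[k] P) : Prop :=
  (∀ u v : P, mul u v = mul v u) ∧
  (∀ u v w : P, mul (mul u v) w = mul u (mul v w)) ∧
  (∀ u v : P, br u v = - br v u) ∧
  (∀ u v w : P, br (br u v) w + br (br v w) u + br (br w u) v = 0) ∧
  (∀ u v w : P, br u (mul v w) = mul (br u v) w + mul v (br u w))

def idm (k M : Type) [Field k] [AddCommGroup M] [Module k M] : M →ₗ[k] M :=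
  LinearMap.id

def tau (k M : Type) [Field k] [AddCommGroup M] [Module k M] :
    M ⊗[k] M →ₗ[k] M ⊗[k] M :=
  (TensorProduct.comm k M M).toLinearMap

def unassoc (k M : Type) [Field k] [AddCommGroup M] [Module k M] :
    M ⊗[k] (M ⊗[k] M) →ₗ[k] (M ⊗[k] M) ⊗[k] M :=
  (TensorProduct.assoc k M M M).symm.toLinearMap

def intch (k A B : Type) [Field k] [AddCommGroup A] [Module k A]
    [AddCommGroup B] [Module k B] :
    (A ⊗[k] A) ⊗[k] (B ⊗[k] B) →ₗ[k] (A ⊗[k] B) ⊗[k] (A ⊗[k] B) :=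
  (TensorProduct.tensorTensorTensorComm k A A B B).toLinearMap

def IsZinbielCo {k A : Type} [Field k] [AddCommGroup A] [Module k A]
    (ϑ : A →ₗ[k] A ⊗[k] A) : Prop :=
  ∀ a : A,
    TensorProduct.map ϑ (idm k A) (ϑ a)
      + TensorProduct.map (tau k A) (idm k A) (TensorProduct.map ϑ (idm k A) (ϑ a))
    = unassoc k A (TensorProduct.map (idm k A) ϑ (ϑ a))

def IsPermCo {k B : Type} [Field k] [AddCommGroup B] [Module k B]
    (ν : B →ₗ[k] B ⊗[k] B) : Prop :=
  ∀ b : B,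
    TensorProduct.map ν (idm k B) (ν b)
      = unassoc k B (TensorProduct.map (idm k B) ν (ν b)) ∧
    TensorProduct.map ν (idm k B) (ν b)
      = TensorProduct.map (tau k B) (idm k B) (TensorProduct.map ν (idm k B) (ν b))

def IsPreLieCo {k A : Type} [Field k] [AddCommGroup A] [Module k A]
    (θ : A →ₗ[k] A ⊗[k] A) : Prop :=
  ∀ a : A,
    unassoc k A (TensorProduct.map (idm k A) θ (θ a))
      - TensorProduct.map (tau k A) (idm k A)
          (unassoc k A (TensorProduct.map (idm k A) θ (θ a)))
    = TensorProduct.map θ (idm k A) (θ a)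
      - TensorProduct.map (tau k A) (idm k A) (TensorProduct.map θ (idm k A) (θ a))

def Zexp {k A : Type} [Field k] [AddCommGroup A] [Module k A]
    (ast : A →ₗ[k] A →ₗ[k] A) {p : ℕ} (x y : Fin p → A) : (A ⊗[k] A) ⊗[k] A :=
  ∑ i : Fin p, ∑ j : Fin p,
    (((ast (x i) (x j)) ⊗ₜ[k] (y j)) ⊗ₜ[k] (y i)
      + ((y j) ⊗ₜ[k] (ast (x i) (x j))) ⊗ₜ[k] (y i)
      + ((x i) ⊗ₜ[k] (x j)) ⊗ₜ[k] (ast (y i) (y j))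
      + ((x j) ⊗ₜ[k] (x i)) ⊗ₜ[k] (ast (y i) (y j))
      - ((x i) ⊗ₜ[k] (ast (y i) (x j))) ⊗ₜ[k] (y j)
      - ((x j) ⊗ₜ[k] (ast (x i) (y j))) ⊗ₜ[k] (y i)
      - ((ast (x i) (y j)) ⊗ₜ[k] (x j)) ⊗ₜ[k] (y i)
      - ((ast (y i) (x j)) ⊗ₜ[k] (x i)) ⊗ₜ[k] (y j))

def PLexp {k A : Type} [Field k] [AddCommGroup A] [Module k A]
    (circ : A →ₗ[k] A →ₗ[k] A) {p : ℕ} (x y : Fin p → A) : (A ⊗[k] A) ⊗[k] A :=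
  ∑ i : Fin p, ∑ j : Fin p,
    (((circ (x i) (x j)) ⊗ₜ[k] (y j)) ⊗ₜ[k] (y i)
      + ((x j) ⊗ₜ[k] (circ (x i) (y j))) ⊗ₜ[k] (y i)
      + ((circ (y i) (x j)) ⊗ₜ[k] (x i)) ⊗ₜ[k] (y j)
      + ((x j) ⊗ₜ[k] (x i)) ⊗ₜ[k] (circ (y i) (y j))
      - ((y j) ⊗ₜ[k] (circ (x i) (x j))) ⊗ₜ[k] (y i)
      - ((x i) ⊗ₜ[k] (circ (y i) (x j))) ⊗ₜ[k] (y j)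
      - ((circ (x i) (y j)) ⊗ₜ[k] (x j)) ⊗ₜ[k] (y i)
      - ((x i) ⊗ₜ[k] (x j)) ⊗ₜ[k] (circ (y i) (y j)))

def AYexp {k P : Type} [Field k] [AddCommGroup P] [Module k P]
    (m : P →ₗ[k] P →ₗ[k] P) {ι : Type} [Fintype ι] (u v : ι → P) :
    (P ⊗[k] P) ⊗[k] P :=
  ∑ α : ι, ∑ β : ι,
    (((m (u α) (u β)) ⊗ₜ[k] (v α)) ⊗ₜ[k] (v β)
      + ((u α) ⊗ₜ[k] (m (v α) (u β))) ⊗ₜ[k] (v β)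
      - ((u β) ⊗ₜ[k] (u α)) ⊗ₜ[k] (m (v α) (v β)))

def CYexp {k P : Type} [Field k] [AddCommGroup P] [Module k P]
    (br : P →ₗ[k] P →ₗ[k] P) {ι : Type} [Fintype ι] (u v : ι → P) :
    (P ⊗[k] P) ⊗[k] P :=
  ∑ α : ι, ∑ β : ι,
    (((br (u α) (u β)) ⊗ₜ[k] (v α)) ⊗ₜ[k] (v β)
      + ((u α) ⊗ₜ[k] (u β)) ⊗ₜ[k] (br (v α) (v β))
      + ((u α) ⊗ₜ[k] (br (v α) (u β))) ⊗ₜ[k] (v β))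

def sharp (k : Type) [Field k] {V : Type} [AddCommGroup V] [Module k V]
    (s : V ⊗[k] V) (ξ : V →ₗ[k] k) : V :=
  TensorProduct.lid k V (LinearMap.rTensor V ξ s)

abbrev PermB (k : Type) [Field k] : Type := ((ℤ × ℤ) × Fin 2) →₀ k

def bB (k : Type) [Field k] (i₁ i₂ : ℤ) (s : Fin 2) : PermB k :=
  Finsupp.single ((i₁, i₂), s) 1

section Helpers
variable (k : Type) [Field k]

section One
variable (M : Type) [AddCommGroup M] [Module k M]

def sw12 : (M ⊗[k] M) ⊗[k] M →ₗ[k] (M ⊗[k] M) ⊗[k] M :=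
  TensorProduct.map (tau k M) (idm k M)

def cyc : (M ⊗[k] M) ⊗[k] M →ₗ[k] (M ⊗[k] M) ⊗[k] M :=
  (TensorProduct.comm k M (M ⊗[k] M)).toLinearMap ∘ₗ (TensorProduct.assoc k M M M).toLinearMap

def sw23 : (M ⊗[k] M) ⊗[k] M →ₗ[k] (M ⊗[k] M) ⊗[k] M :=
  unassoc k M ∘ₗ TensorProduct.map (idm k M) (tau k M) ∘ₗ (TensorProduct.assoc k M M M).toLinearMap

variable {M}

@[simp] lemma tau_tmul (x y : M) : tau k M (x ⊗ₜ[k] y) = y ⊗ₜ[k] x := rfl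

@[simp] lemma unassoc_tmul (x y z : M) :
    unassoc k M (x ⊗ₜ[k] (y ⊗ₜ[k] z)) = (x ⊗ₜ[k] y) ⊗ₜ[k] z := rfl

@[simp] lemma sw12_tmul (x y z : M) :
    sw12 k M ((x ⊗ₜ[k] y) ⊗ₜ[k] z) = (y ⊗ₜ[k] x) ⊗ₜ[k] z := rfl

@[simp] lemma cyc_tmul (x y z : M) :
    cyc k M ((x ⊗ₜ[k] y) ⊗ₜ[k] z) = (y ⊗ₜ[k] z) ⊗ₜ[k] x := rfl

@[simp] lemma sw23_tmul (x y z : M) :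
    sw23 k M ((x ⊗ₜ[k] y) ⊗ₜ[k] z) = (x ⊗ₜ[k] z) ⊗ₜ[k] y := rfl

lemma e1 (Z : (M ⊗[k] M) ⊗[k] M) : cyc k M (sw12 k M Z) = sw23 k M Z := by
  have h : cyc k M ∘ₗ sw12 k M = sw23 k M := by ext x y z; simp
  exact LinearMap.congr_fun h Z

lemma e2 (Z : (M ⊗[k] M) ⊗[k] M) :
    sw12 k M (cyc k M (sw12 k M Z)) = cyc k M (cyc k M Z) := by
  have h : sw12 k M ∘ₗ cyc k M ∘ₗ sw12 k M = cyc k M ∘ₗ cyc k M := by ext x y z; simp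
  exact LinearMap.congr_fun h Z

lemma e3 (Z : (M ⊗[k] M) ⊗[k] M) : sw23 k M (sw12 k M Z) = cyc k M Z := by
  have h : sw23 k M ∘ₗ sw12 k M = cyc k M := by ext x y z; simp
  exact LinearMap.congr_fun h Z

lemma e4 (Z : (M ⊗[k] M) ⊗[k] M) :
    sw23 k M (cyc k M (cyc k M Z)) = sw12 k M (cyc k M Z) := by
  have h : sw23 k M ∘ₗ cyc k M ∘ₗ cyc k M = sw12 k M ∘ₗ cyc k M := by ext x y z; simp
  exact LinearMap.congr_fun h Z

lemma e7 (Z : (M ⊗[k] M) ⊗[k] M) :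
    cyc k M (sw23 k M Z) = sw12 k M (cyc k M Z) := by
  have h : cyc k M ∘ₗ sw23 k M = sw12 k M ∘ₗ cyc k M := by ext x y z; simp
  exact LinearMap.congr_fun h Z

lemma tau_tau (x : M ⊗[k] M) : tau k M (tau k M x) = x := by
  induction x using TensorProduct.induction_on with
  | zero => simp
  | tmul => simp
  | add a b ha hb => simp [ha, hb]

end One

section Two
variable (A B : Type) [AddCommGroup A] [Module k A] [AddCommGroup B] [Module k B]

def sig : ((A ⊗[k] A) ⊗[k] A) ⊗[k] ((B ⊗[k] B) ⊗[k] B) →ₗ[k]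
    ((A ⊗[k] B) ⊗[k] (A ⊗[k] B)) ⊗[k] (A ⊗[k] B) :=
  TensorProduct.map (intch k A B) LinearMap.id ∘ₗ
    (TensorProduct.tensorTensorTensorComm k (A ⊗[k] A) A (B ⊗[k] B) B).toLinearMap

variable {A B}

@[simp] lemma intch_tmul (x y : A) (u v : B) :
    intch k A B ((x ⊗ₜ[k] y) ⊗ₜ[k] (u ⊗ₜ[k] v)) = (x ⊗ₜ[k] u) ⊗ₜ[k] (y ⊗ₜ[k] v) := by
  simp [intch]

@[simp] lemma sig_tmul (x y z : A) (u v w : B) :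
    sig k A B (((x ⊗ₜ[k] y) ⊗ₜ[k] z) ⊗ₜ[k] ((u ⊗ₜ[k] v) ⊗ₜ[k] w))
      = ((x ⊗ₜ[k] u) ⊗ₜ[k] (y ⊗ₜ[k] v)) ⊗ₜ[k] (z ⊗ₜ[k] w) := by
  simp [sig]

lemma c1 (U : (A ⊗[k] A) ⊗[k] A) (V : (B ⊗[k] B) ⊗[k] B) :
    TensorProduct.map (tau k (A ⊗[k] B)) (idm k (A ⊗[k] B)) (sig k A B (U ⊗ₜ[k] V))
      = sig k A B (sw12 k A U ⊗ₜ[k] sw12 k B V) := by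
  have h : TensorProduct.map (tau k (A ⊗[k] B)) (idm k (A ⊗[k] B)) ∘ₗ sig k A B
      = sig k A B ∘ₗ TensorProduct.map (sw12 k A) (sw12 k B) := by
    ext x y z u v w
    simp [idm]
  simpa using LinearMap.congr_fun h (U ⊗ₜ[k] V)

lemma c2 (U : (A ⊗[k] A) ⊗[k] A) (V : (B ⊗[k] B) ⊗[k] B) :
    sw23 k (A ⊗[k] B) (sig k A B (U ⊗ₜ[k] V))
      = sig k A B (sw23 k A U ⊗ₜ[k] sw23 k B V) := by
  have h : sw23 k (A ⊗[k] B) ∘ₗ sig k A B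
      = sig k A B ∘ₗ TensorProduct.map (sw23 k A) (sw23 k B) := by
    ext x y z u v w
    simp [idm]
  simpa using LinearMap.congr_fun h (U ⊗ₜ[k] V)

lemma l2 (Φ : A ⊗[k] A) (Ψ : B ⊗[k] B) :
    tau k (A ⊗[k] B) (intch k A B (Φ ⊗ₜ[k] Ψ))
      = intch k A B (tau k A Φ ⊗ₜ[k] tau k B Ψ) := by
  have h : tau k (A ⊗[k] B) ∘ₗ intch k A B
      = intch k A B ∘ₗ TensorProduct.map (tau k A) (tau k B) := by
    ext x y u v
    simp
  simpa using LinearMap.congr_fun h (Φ ⊗ₜ[k] Ψ)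

end Two
section Three
variable {k A B : Type} [Field k] [AddCommGroup A] [Module k A] [AddCommGroup B] [Module k B]

lemma l4 (ϑ : A →ₗ[k] A ⊗[k] A) (Φ : A ⊗[k] A) :
    TensorProduct.map ϑ (idm k A) (tau k A Φ)
      = cyc k A (unassoc k A (TensorProduct.map (idm k A) ϑ Φ)) := by
  induction Φ using TensorProduct.induction_on with
  | zero => simp
  | tmul x y =>
    simp only [tau_tmul, map_tmul, idm, LinearMap.id_coe, id_eq]
    generalize ϑ y = P
    induction P using TensorProduct.induction_on with
    | zero => simp
    | tmul p q => simp
    | add p q hp hq => simp [tmul_add, add_tmul, hp, hq]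
  | add x y hx hy => simp [hx, hy]

lemma l5 (ϑ : A →ₗ[k] A ⊗[k] A) (Φ : A ⊗[k] A) :
    unassoc k A (TensorProduct.map (idm k A) ϑ (tau k A Φ))
      = cyc k A (cyc k A (TensorProduct.map ϑ (idm k A) Φ)) := by
  induction Φ using TensorProduct.induction_on with
  | zero => simp
  | tmul x y =>
    simp only [tau_tmul, map_tmul, idm, LinearMap.id_coe, id_eq]
    generalize ϑ x = P
    induction P using TensorProduct.induction_on with
    | zero => simp
    | tmul p q => simp
    | add p q hp hq => simp [tmul_add, add_tmul, hp, hq]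
  | add x y hx hy => simp [hx, hy]

lemma l1 (ϑ : A →ₗ[k] A ⊗[k] A) (ν : B →ₗ[k] B ⊗[k] B)
    (Δ : A ⊗[k] B →ₗ[k] (A ⊗[k] B) ⊗[k] (A ⊗[k] B))
    (hΔ : ∀ (a : A) (b : B),
      Δ (a ⊗ₜ[k] b)
        = intch k A B ((ϑ a) ⊗ₜ[k] (ν b))
          + tau k (A ⊗[k] B) (intch k A B ((ϑ a) ⊗ₜ[k] (ν b))))
    (Φ : A ⊗[k] A) (Ψ : B ⊗[k] B) :
    TensorProduct.map Δ (idm k (A ⊗[k] B)) (intch k A B (Φ ⊗ₜ[k] Ψ))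
      = sig k A B ((TensorProduct.map ϑ (idm k A) Φ) ⊗ₜ[k] (TensorProduct.map ν (idm k B) Ψ))
        + TensorProduct.map (tau k (A ⊗[k] B)) (idm k (A ⊗[k] B))
            (sig k A B ((TensorProduct.map ϑ (idm k A) Φ) ⊗ₜ[k] (TensorProduct.map ν (idm k B) Ψ))) := by
  induction Φ using TensorProduct.induction_on with
  | zero => simp
  | tmul x y =>
    induction Ψ using TensorProduct.induction_on with
    | zero => simp
    | tmul u v =>
      simp only [intch_tmul, map_tmul, idm, LinearMap.id_coe, id_eq, hΔ]
      generalize ϑ x = P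
      generalize ν u = Q
      induction P using TensorProduct.induction_on with
      | zero => simp
      | tmul p p' =>
        induction Q using TensorProduct.induction_on with
        | zero => simp
        | tmul q q' => simp [add_tmul]
        | add q1 q2 h1 h2 =>
          simp only [tmul_add, add_tmul, map_add] at h1 h2 ⊢
          rw [add_add_add_comm, h1, h2, add_add_add_comm]
      | add p1 p2 h1 h2 =>
        simp only [tmul_add, add_tmul, map_add] at h1 h2 ⊢
        rw [add_add_add_comm, h1, h2, add_add_add_comm]
    | add Ψ1 Ψ2 h1 h2 =>
      simp only [tmul_add, add_tmul, map_add] at h1 h2 ⊢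
      rw [add_add_add_comm, h1, h2, add_add_add_comm]
  | add Φ1 Φ2 h1 h2 =>
    simp only [tmul_add, add_tmul, map_add] at h1 h2 ⊢
    rw [add_add_add_comm, h1, h2, add_add_add_comm]

lemma l3 (ϑ : A →ₗ[k] A ⊗[k] A) (ν : B →ₗ[k] B ⊗[k] B)
    (Δ : A ⊗[k] B →ₗ[k] (A ⊗[k] B) ⊗[k] (A ⊗[k] B))
    (hΔ : ∀ (a : A) (b : B),
      Δ (a ⊗ₜ[k] b)
        = intch k A B ((ϑ a) ⊗ₜ[k] (ν b))
          + tau k (A ⊗[k] B) (intch k A B ((ϑ a) ⊗ₜ[k] (ν b))))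
    (Φ : A ⊗[k] A) (Ψ : B ⊗[k] B) :
    unassoc k (A ⊗[k] B) (TensorProduct.map (idm k (A ⊗[k] B)) Δ (intch k A B (Φ ⊗ₜ[k] Ψ)))
      = sig k A B ((unassoc k A (TensorProduct.map (idm k A) ϑ Φ)) ⊗ₜ[k]
            (unassoc k B (TensorProduct.map (idm k B) ν Ψ)))
        + sw23 k (A ⊗[k] B)
            (sig k A B ((unassoc k A (TensorProduct.map (idm k A) ϑ Φ)) ⊗ₜ[k]
              (unassoc k B (TensorProduct.map (idm k B) ν Ψ)))) := by
  induction Φ using TensorProduct.induction_on with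
  | zero => simp
  | tmul x y =>
    induction Ψ using TensorProduct.induction_on with
    | zero => simp
    | tmul u v =>
      simp only [intch_tmul, map_tmul, idm, LinearMap.id_coe, id_eq, hΔ]
      generalize ϑ y = P
      generalize ν v = Q
      induction P using TensorProduct.induction_on with
      | zero => simp
      | tmul p p' =>
        induction Q using TensorProduct.induction_on with
        | zero => simp
        | tmul q q' => simp [tmul_add]
        | add q1 q2 h1 h2 =>
          simp only [tmul_add, add_tmul, map_add] at h1 h2 ⊢
          rw [add_add_add_comm, h1, h2, add_add_add_comm]
      | add p1 p2 h1 h2 =>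
        simp only [tmul_add, add_tmul, map_add] at h1 h2 ⊢
        rw [add_add_add_comm, h1, h2, add_add_add_comm]
    | add Ψ1 Ψ2 h1 h2 =>
      simp only [tmul_add, add_tmul, map_add] at h1 h2 ⊢
      rw [add_add_add_comm, h1, h2, add_add_add_comm]
  | add Φ1 Φ2 h1 h2 =>
    simp only [tmul_add, add_tmul, map_add] at h1 h2 ⊢
    rw [add_add_add_comm, h1, h2, add_add_add_comm]

end Three

theorem statement4 (k A B : Type) [Field k] [CharZero k]
    [AddCommGroup A] [Module k A] [AddCommGroup B] [Module k B]
    (ϑ : A →ₗ[k] A ⊗[k] A) (hϑ : IsZinbielCo ϑ)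
    (ν : B →ₗ[k] B ⊗[k] B) (hνp : IsPermCo ν)
    (Δ : A ⊗[k] B →ₗ[k] (A ⊗[k] B) ⊗[k] (A ⊗[k] B))
    (hΔ : ∀ (a : A) (b : B),
      Δ (a ⊗ₜ[k] b)
        = intch k A (B) ((ϑ a) ⊗ₜ[k] (ν b))
          + tau k (A ⊗[k] B) (intch k A (B) ((ϑ a) ⊗ₜ[k] (ν b))))
    :
    (∀ q : A ⊗[k] B, tau k (A ⊗[k] B) (Δ q) = Δ q) ∧
    (∀ q : A ⊗[k] B,
      TensorProduct.map Δ (idm k (A ⊗[k] B)) (Δ q)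
        = unassoc k (A ⊗[k] B) (TensorProduct.map (idm k (A ⊗[k] B)) Δ (Δ q))) := by
  constructor
  · intro q
    induction q using TensorProduct.induction_on with
    | zero => simp
    | tmul a b => rw [hΔ a b, map_add, tau_tau]; abel
    | add x y hx hy => rw [map_add, map_add, hx, hy]
  · intro q
    induction q using TensorProduct.induction_on with
    | zero => simp
    | tmul a b =>
      have hA : TensorProduct.map ϑ (idm k A) (ϑ a)
          + sw12 k A (TensorProduct.map ϑ (idm k A) (ϑ a))
          = unassoc k A (TensorProduct.map (idm k A) ϑ (ϑ a)) := hϑ a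
      have hB1 : TensorProduct.map ν (idm k B) (ν b)
          = unassoc k B (TensorProduct.map (idm k B) ν (ν b)) := (hνp b).1
      have hB2 : sw12 k B (TensorProduct.map ν (idm k B) (ν b))
          = TensorProduct.map ν (idm k B) (ν b) := ((hνp b).2).symm
      rw [hΔ a b, map_add, map_add, map_add]
      rw [l2, l1 ϑ ν Δ hΔ, l1 ϑ ν Δ hΔ, l3 ϑ ν Δ hΔ, l3 ϑ ν Δ hΔ]
      rw [l4 ϑ (ϑ a), l4 ν (ν b), l5 ϑ (ϑ a), l5 ν (ν b)]
      rw [← hA, ← hB1]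
      generalize TensorProduct.map ϑ (idm k A) (ϑ a) = X at *
      generalize TensorProduct.map ν (idm k B) (ν b) = Y at *
      simp only [map_add, tmul_add, add_tmul, c1, c2]
      have k2 := e1 k Y
      rw [hB2] at k2
      have k5 : cyc k B (sw23 k B Y) = sw12 k B (sw23 k B Y) := by rw [e7, k2]
      rw [hB2, e2 k X, e1 k X, k2, k5, e3 k X, e4 k X, e3 k (sw23 k B Y), k5]
      abel
    | add x y hx hy =>
      rw [map_add, map_add, map_add, hx, hy, map_add]
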